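/- arXiv:math/0411322 — 2 statements merged into one kernel-verified Lean document; each statement's English description precedes it below -/
import Mathlib

section
/- Let G and K be groups, φ : G → K a group homomorphism, K' a subgroup of K, and H = φ⁻¹(K'). Let a, b ∈ H and h ∈ G be such that b = h⁻¹ a h. Then there exists h' ∈ H with b = h'⁻¹ a h' if and only if there exists c ∈ C_G(a) with φ(c·h) ∈ K' (i.e., if and only if φ(C_G(a)·h) ∩ K' is nonempty). -/
/-- Correctness of Algorithm 3.1: given `b = h⁻¹ * a * h` with `a, b ∈ H = φ⁻¹(K')`,
`a` and `b` are conjugate by an element of `H` iff some `c` in the centralizer of `a`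
in `G` satisfies `φ (c * h) ∈ K'`. -/
theorem stmt_0 {G K : Type*} [Group G] [Group K] (φ : G →* K) (K' : Subgroup K)
    (H : Subgroup G) (hH : H = K'.comap φ)
    (a b : G) (ha : a ∈ H) (hb : b ∈ H) (h : G) (hconj : b = h⁻¹ * a * h) :
    (∃ h' ∈ H, b = h'⁻¹ * a * h') ↔
      ∃ c ∈ Subgroup.centralizer ({a} : Set G), φ (c * h) ∈ K' := by
  subst hH
  constructor
  · rintro ⟨h', hh', hb'⟩
    refine ⟨h' * h⁻¹, ?_, ?_⟩
    · rw [Subgroup.mem_centralizer_singleton_iff]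
      have key : h'⁻¹ * a * h' = h⁻¹ * a * h := hb'.symm.trans hconj
      calc h' * h⁻¹ * a = h' * (h⁻¹ * a * h) * h⁻¹ := by group
        _ = h' * (h'⁻¹ * a * h') * h⁻¹ := by rw [← key]
        _ = a * (h' * h⁻¹) := by group
    · simpa using hh'
  · rintro ⟨c, hc, hch⟩
    rw [Subgroup.mem_centralizer_singleton_iff] at hc
    refine ⟨c * h, hch, ?_⟩
    rw [hconj]
    calc h⁻¹ * a * h = h⁻¹ * c⁻¹ * (c * a) * h := by group
      _ = h⁻¹ * c⁻¹ * (a * c) * h := by rw [hc]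
      _ = (c * h)⁻¹ * a * (c * h) := by group
end

section
/- Let G and K be groups, φ : G → K a group homomorphism, K' a subgroup of K, and H = φ⁻¹(K'). Then two elements a, b ∈ H are conjugate by an element of H if and only if there exists h ∈ G such that b = h⁻¹ a h and there exists c ∈ C_G(a) with φ(c·h) ∈ K'. -/
/-- Correctness of Algorithm 3.2: for `a, b ∈ H = φ⁻¹(K')`, `a` and `b` are conjugate
by an element of `H` iff there exists `h ∈ G` with `b = h⁻¹ * a * h` and some `c` in the
centralizer of `a` in `G` with `φ (c * h) ∈ K'`. -/
theorem stmt_3 {G K : Type*} [Group G] [Group K] (φ : G →* K) (K' : Subgroup K)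
    (H : Subgroup G) (hH : H = K'.comap φ)
    (a b : G) (ha : a ∈ H) (hb : b ∈ H) :
    (∃ h' ∈ H, b = h'⁻¹ * a * h') ↔
      ∃ h : G, b = h⁻¹ * a * h ∧
        ∃ c ∈ Subgroup.centralizer ({a} : Set G), φ (c * h) ∈ K' := by
  subst hH
  constructor
  · rintro ⟨h', hh', rfl⟩
    exact ⟨h', rfl, 1, Subgroup.one_mem _, by simpa using hh'⟩
  · rintro ⟨h, rfl, c, hc, hch⟩
    have hca : c * a = a * c := (Subgroup.mem_centralizer_iff.mp hc a rfl).symm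
    refine ⟨c * h, hch, ?_⟩
    simp only [mul_inv_rev, mul_assoc]
    rw [← mul_assoc a c, ← hca, mul_assoc, inv_mul_cancel_left]
end
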